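/- For every λ ∈ k \ {0}, the family {u_n^{(λ)} : n ≥ 1}, where u_n^{(λ)} := −(t + λt⁻¹)^{n−1}(t² − λ) d/dt, is a basis of O(λ), and [u_n^{(λ)}, u_m^{(λ)}] = (n−m)(u_{n+m}^{(λ)} − 4λ·u_{n+m−2}^{(λ)}) for all n, m ≥ 1 (with u_0^{(λ)} := 0). Consequently, O(λ) is isomorphic as a Lie algebra to the subalgebra (t² − 4λ)·k[t]·d/dt of the one-sided Witt algebra Der(k[t]), via the change of variables sending u_n^{(λ)} to −t^{n−1}(t² − 4λ) d/dt. -/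

import Mathlib

open Polynomial

section PhiAux
variable {k : Type*} [Field k] {W : Type*} [LieRing W] [LieAlgebra k W]

noncomputable def wPhiL (D : ℤ → W) (K : ℤ) : Polynomial k →ₗ[k] W where
  toFun p := p.sum fun s a => a • D (K - 2 * s)
  map_add' p q := Polynomial.sum_add_index p q _ (fun _ => zero_smul k _)
    (fun _ b c => add_smul b c _)
  map_smul' c p := by
    show ((c • p).sum fun s a => a • D (K - 2 * s)) = _
    rw [Polynomial.sum_smul_index p c (fun s a => a • D (K - 2 * s)) (fun _ => zero_smul k _)]
    show _ = c • p.sum fun s a => a • D (K - 2 * s)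
    simp only [Polynomial.sum_def, Finset.smul_sum, mul_smul]

lemma wPhiL_monomial (D : ℤ → W) (K : ℤ) (s : ℕ) (a : k) :
    wPhiL D K (monomial s a) = a • D (K - 2 * s) := by
  simp only [wPhiL, LinearMap.coe_mk, AddHom.coe_mk]
  exact Polynomial.sum_monomial_index a _ (zero_smul k _)

lemma wPhiL_X_mul (D : ℤ → W) (K : ℤ) (p : Polynomial k) :
    wPhiL D K (X * p) = wPhiL D (K - 2) p := by
  induction p using Polynomial.induction_on' with
  | add p q hp hq => rw [mul_add, map_add, map_add, hp, hq]
  | monomial s a =>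
      rw [X_mul_monomial, wPhiL_monomial, wPhiL_monomial]
      congr 2
      push_cast; ring

noncomputable def dpol (K : ℤ) (p : Polynomial k) : Polynomial k :=
  C ((K : k)) * p - C 2 * (X * derivative p)

lemma dpol_add (K : ℤ) (p q : Polynomial k) :
    dpol K (p + q) = dpol K p + dpol K q := by
  simp only [dpol, derivative_add, mul_add]; ring

lemma dpol_monomial (K : ℤ) (s : ℕ) (a : k) :
    dpol K (monomial s a) = monomial s ((((K : k)) - 2 * s) * a) := by
  have hXd : X * derivative (monomial s a : Polynomial k) = monomial s (a * s) := by
    cases s with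
    | zero => simp
    | succ t =>
        rw [derivative_monomial, X_mul_monomial]
        congr 1
  rw [dpol, hXd, C_mul_monomial, C_mul_monomial, ← map_sub]
  congr 1
  ring

lemma one_sub_CX_mul (lam : k) (n : ℕ) (e : k) :
    (1 - C lam * X) * (monomial n e : Polynomial k)
      = monomial n e - monomial (n + 1) (lam * e) := by
  rw [sub_mul, one_mul, mul_assoc, X_mul_monomial, C_mul_monomial]

lemma wPhiL_bracket (lam : k) (D : ℤ → W)
    (hD : ∀ a b : ℤ, ⁅D a, D b⁆ = ((a - b : ℤ) : k) • (D (a + b) - lam • D (a + b - 2)))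
    (K M : ℤ) (p q : Polynomial k) :
    ⁅wPhiL D K p, wPhiL D M q⁆ =
      wPhiL D (K + M) ((1 - C lam * X) * (dpol K p * q - p * dpol M q)) := by
  induction p using Polynomial.induction_on' with
  | add p r hp hr =>
      rw [map_add, add_lie, hp, hr, dpol_add,
        show (1 - C lam * X) * ((dpol K p + dpol K r) * q - (p + r) * dpol M q)
          = (1 - C lam * X) * (dpol K p * q - p * dpol M q)
            + (1 - C lam * X) * (dpol K r * q - r * dpol M q) from by ring, map_add]
  | monomial s a =>
      induction q using Polynomial.induction_on' with
      | add q r hq hr =>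
          rw [map_add, lie_add, hq, hr, dpol_add,
            show (1 - C lam * X) * (dpol K (monomial s a) * (q + r)
                - monomial s a * (dpol M q + dpol M r))
              = (1 - C lam * X) * (dpol K (monomial s a) * q - monomial s a * dpol M q)
                + (1 - C lam * X) * (dpol K (monomial s a) * r - monomial s a * dpol M r)
              from by ring, map_add]
      | monomial t c =>
          rw [wPhiL_monomial, wPhiL_monomial, lie_smul, smul_lie, hD, dpol_monomial,
            dpol_monomial, monomial_mul_monomial, monomial_mul_monomial, ← map_sub,
            one_sub_CX_mul, map_sub, wPhiL_monomial, wPhiL_monomial]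
          push_cast
          ring_nf
          module

lemma one_add_CX_pow (lam : k) (n : ℕ) :
    ((1 + C lam * X : Polynomial k)) ^ n
      = ∑ j ∈ Finset.range (n + 1), monomial j (((n.choose j : ℕ) : k) * lam ^ j) := by
  rw [add_comm, add_pow]
  refine Finset.sum_congr rfl fun j hj => ?_
  rw [one_pow, mul_one, mul_pow, ← C_pow, mul_comm (C (lam ^ j)), mul_assoc,
    ← C_eq_natCast, ← map_mul, mul_comm ((X:Polynomial k)^j),
    C_mul_X_pow_eq_monomial, mul_comm]

lemma deriv_one_add_CX_pow (lam : k) (n : ℕ) :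
    derivative (((1 + C lam * X : Polynomial k)) ^ n)
      = C ((n : k)) * C lam * (1 + C lam * X) ^ (n - 1) := by
  rw [derivative_pow]
  simp
  ring


variable {W : Type*} [LieRing W] [LieAlgebra k W]

/-- D a = L a - lam • L (a-2) -/
noncomputable def DD (L : ℤ → W) (lam : k) : ℤ → W := fun a => L a - lam • L (a - 2)

lemma DD_bracket (L : ℤ → W) (lam : k)
    (hLbracket : ∀ n m : ℤ, ⁅L n, L m⁆ = ((n - m : ℤ) : k) • L (n + m)) (a b : ℤ) :
    ⁅DD L lam a, DD L lam b⁆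
      = ((a - b : ℤ) : k) • (DD L lam (a + b) - lam • DD L lam (a + b - 2)) := by
  have h1 := hLbracket a b
  have h2 := hLbracket a (b - 2); rw [show a + (b - 2) = a + b - 2 from by ring] at h2
  have h3 := hLbracket (a - 2) b; rw [show (a - 2) + b = a + b - 2 from by ring] at h3
  have h4 := hLbracket (a - 2) (b - 2)
  rw [show (a - 2) + (b - 2) = a + b - 4 from by ring] at h4
  simp only [DD, lie_sub, sub_lie, lie_smul, smul_lie, h1, h2, h3, h4,
    show a + b - 2 - 2 = a + b - 4 from by ring]
  push_cast
  module

lemma u_eq_phi (L : ℤ → W) (lam : k) (u : ℕ → W)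
    (hu : ∀ n : ℕ, u n = ∑ j ∈ Finset.range n,
      ((((n - 1).choose j : ℕ) : k) * lam ^ j) •
        (L ((n : ℤ) - 2 * j) - lam • L ((n : ℤ) - 2 * j - 2))) (n : ℕ) :
    u (n + 1) = wPhiL (DD L lam) ((n : ℤ) + 1) ((1 + C lam * X) ^ n) := by
  rw [hu (n + 1), one_add_CX_pow, map_sum]
  refine Finset.sum_congr rfl fun j hj => ?_
  rw [wPhiL_monomial]
  simp only [DD, Nat.add_sub_cancel]
  push_cast
  ring_nf

lemma bracket_u (L : ℤ → W) (lam : k)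
    (hLbracket : ∀ n m : ℤ, ⁅L n, L m⁆ = ((n - m : ℤ) : k) • L (n + m))
    (u : ℕ → W)
    (hu : ∀ n : ℕ, u n = ∑ j ∈ Finset.range n,
      ((((n - 1).choose j : ℕ) : k) * lam ^ j) •
        (L ((n : ℤ) - 2 * j) - lam • L ((n : ℤ) - 2 * j - 2))) (n m : ℕ) :
    ⁅u (n + 1), u (m + 1)⁆
      = (((n : ℤ) - (m : ℤ)) : k) • (u (n + m + 2) - (4 * lam) • u (n + m)) := by
  rcases Nat.eq_zero_or_pos (n + m) with h0 | hpos
  · obtain ⟨rfl, rfl⟩ : n = 0 ∧ m = 0 := by omega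
    simp
  obtain ⟨c, hc⟩ : ∃ c, n + m = c + 1 := ⟨n + m - 1, by omega⟩
  have hunm2 : u (n + m + 2) = wPhiL (DD L lam) (((n : ℤ) + 1) + ((m : ℤ) + 1))
      ((1 + C lam * X) ^ (n + m + 1)) := by
    rw [show n + m + 2 = (n + m + 1) + 1 from rfl, u_eq_phi L lam u hu]
    congr 1
    push_cast; ring
  have hunm : u (n + m) = wPhiL (DD L lam) (((n : ℤ) + 1) + ((m : ℤ) + 1))
      (X * (1 + C lam * X) ^ c) := by
    rw [hc, u_eq_phi L lam u hu, wPhiL_X_mul,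
      show (n:ℤ) + 1 + ((m:ℤ) + 1) - 2 = (c:ℤ) + 1 from by omega]
  rw [u_eq_phi L lam u hu, u_eq_phi L lam u hu,
    wPhiL_bracket lam _ (DD_bracket L lam hLbracket), hunm2, hunm,
    ← map_smul, ← map_sub, ← map_smul]
  congr 1
  simp only [smul_eq_C_mul, dpol, deriv_one_add_CX_pow]
  rcases n with _ | a <;> rcases m with _ | b
  · omega
  · obtain rfl : c = b := by omega
    push_cast
    simp only [map_add, map_sub, map_mul, map_one, map_ofNat, map_natCast, map_zero]
    ring
  · obtain rfl : c = a := by omega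
    push_cast
    simp only [map_add, map_sub, map_mul, map_one, map_ofNat, map_natCast, map_zero]
    ring
  · obtain rfl : c = a + b + 1 := by omega
    push_cast
    simp only [map_add, map_sub, map_mul, map_one, map_ofNat, map_natCast, map_zero]
    ring

end PhiAux

section Indep
variable {k : Type*} [Field k] {M : Type*} [AddCommGroup M] [Module k M]

lemma linearIndependent_of_leading (w : ℕ → M) (φ : ℕ → M →ₗ[k] k)
    (h0 : ∀ i j : ℕ, i < j → φ j (w i) = 0) (h1 : ∀ i, φ i (w i) = 1) :
    LinearIndependent k w := by
  rw [linearIndependent_iff']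
  intro s
  induction s using Finset.strongInductionOn with
  | _ s ih =>
    intro gc hsum i hi
    have hne : s.Nonempty := ⟨i, hi⟩
    set Mx := s.max' hne with hMxdef
    have hMxs : Mx ∈ s := s.max'_mem hne
    have hg : gc Mx = 0 := by
      have h2 := congrArg (φ Mx) hsum
      rw [map_sum, map_zero] at h2
      rw [Finset.sum_eq_single Mx (fun b hb hbne => by
        rw [map_smul, h0 b Mx (lt_of_le_of_ne (s.le_max' b hb) hbne), smul_zero])
        (fun h => absurd hMxs h)] at h2
      rw [map_smul, h1, smul_eq_mul, mul_one] at h2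
      exact h2
    have hsum' : ∑ j ∈ s.erase Mx, gc j • w j = 0 := by
      rw [Finset.sum_erase_eq_sub hMxs, hsum, hg, zero_smul, sub_zero]
    rcases eq_or_ne i Mx with rfl | hne2
    · exact hg
    · exact ih (s.erase Mx) (Finset.erase_ssubset hMxs) gc hsum' i
        (Finset.mem_erase.mpr ⟨hne2, hi⟩)

end Indep


section UIndep
variable {k : Type*} [Field k] {W : Type*} [LieRing W] [LieAlgebra k W]

lemma coord_u (L : ℤ → W) (lam : k) (u : ℕ → W) (b : Module.Basis ℤ k W)
    (hb : ∀ a : ℤ, b a = L a)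
    (hu : ∀ n : ℕ, u n = ∑ j ∈ Finset.range n,
      ((((n - 1).choose j : ℕ) : k) * lam ^ j) •
        (L ((n : ℤ) - 2 * j) - lam • L ((n : ℤ) - 2 * j - 2)))
    (n : ℕ) (N : ℤ) (hn : (n : ℤ) + 1 ≤ N) :
    b.coord N (u (n + 1)) = if (n : ℤ) + 1 = N then 1 else 0 := by
  have hL : ∀ a : ℤ, b.coord N (L a) = if a = N then 1 else 0 := by
    intro a
    rw [← hb a, Module.Basis.coord_apply, Module.Basis.repr_self, Finsupp.single_apply]
  rw [hu (n + 1)]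
  rw [map_sum]
  simp only [map_smul, map_sub, hL, smul_eq_mul, Nat.add_sub_cancel]
  push_cast
  by_cases hN : (n : ℤ) + 1 = N
  · rw [if_pos hN, Finset.sum_eq_single 0 (fun j hj hj0 => by
      have hjn : j ≤ n := by have := Finset.mem_range.mp hj; omega
      rw [if_neg (by omega), if_neg (by omega)]; ring)
      (fun h => absurd (Finset.mem_range.mpr (Nat.succ_pos n)) h)]
    rw [if_pos (by push_cast; omega), if_neg (by push_cast; omega)]
    simp
  · rw [if_neg hN, Finset.sum_eq_zero]
    intro j hj
    have hjn : j ≤ n := by have := Finset.mem_range.mp hj; omega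
    rw [if_neg (by omega), if_neg (by omega)]
    ring

end UIndep


section VT
variable {k : Type*} [Field k] {W : Type*} [LieRing W] [LieAlgebra k W]

lemma vt_neg (L : ℤ → W) (lam : k) (hlam : lam ≠ 0) (a : ℤ) :
    L a - lam ^ a • L (-a) = (-(lam ^ a)) • (L (-a) - lam ^ (-a) • L (-(-a))) := by
  have h1 : lam ^ a * lam ^ (-a) = 1 := by
    rw [← zpow_add₀ hlam]; simp
  rw [neg_neg, smul_sub, smul_smul, neg_mul, h1, neg_smul, neg_smul, one_smul, sub_neg_eq_add]
  abel

lemma vt_bracket (L : ℤ → W) (lam : k) (hlam : lam ≠ 0)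
    (hLbracket : ∀ n m : ℤ, ⁅L n, L m⁆ = ((n - m : ℤ) : k) • L (n + m)) (a b : ℤ) :
    ⁅L a - lam ^ a • L (-a), L b - lam ^ b • L (-b)⁆
      = ((a - b : ℤ) : k) • (L (a + b) - lam ^ (a + b) • L (-(a + b)))
        + ((a + b : ℤ) : k) • lam ^ a • (L (b - a) - lam ^ (b - a) • L (-(b - a))) := by
  have h1 := hLbracket a b
  have h2 := hLbracket a (-b); rw [show a + -b = a - b from by ring] at h2
  have h3 := hLbracket (-a) b; rw [show -a + b = b - a from by ring] at h3
  have h4 := hLbracket (-a) (-b); rw [show -a + -b = -(a + b) from by ring] at h4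
  have e1 : lam ^ (a + b) = lam ^ a * lam ^ b := zpow_add₀ hlam a b
  have e2 : lam ^ a * lam ^ (b - a) = lam ^ b := by
    rw [← zpow_add₀ hlam]; congr 1; ring
  simp only [lie_sub, sub_lie, lie_smul, smul_lie, h1, h2, h3, h4, smul_sub, smul_smul,
    e1, e2, neg_sub, neg_neg]
  push_cast
  module

end VT


section G
variable {k : Type*} [Field k] {W1 : Type*} [LieRing W1] [LieAlgebra k W1]

lemma bracket_g (lam : k) (ℓ : ℕ → W1)
    (hℓbracket : ∀ i j : ℕ, ⁅ℓ i, ℓ j⁆ = (((i : ℤ) - (j : ℤ)) : k) • ℓ (i + j - 1))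
    (g : ℕ → W1)
    (hg : ∀ n : ℕ, g n = ℓ (n + 1) - (4 * lam) • ℓ (n - 1)) (a b : ℕ) :
    ⁅g (a + 1), g (b + 1)⁆
      = (((a : ℤ) - (b : ℤ)) : k) • (g (a + b + 2) - (4 * lam) • g (a + b)) := by
  have e1 := hℓbracket (a + 2) (b + 2)
  rw [show a + 2 + (b + 2) - 1 = a + b + 3 from by omega] at e1
  have e2 := hℓbracket (a + 2) b
  rw [show a + 2 + b - 1 = a + b + 1 from by omega] at e2
  have e3 := hℓbracket a (b + 2)
  rw [show a + (b + 2) - 1 = a + b + 1 from by omega] at e3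
  have e4 := hℓbracket a b
  rw [hg (a + 1), hg (b + 1), hg (a + b + 2), hg (a + b)]
  simp only [Nat.add_sub_cancel, show a + 1 + 1 = a + 2 from rfl, show b + 1 + 1 = b + 2 from rfl,
    show a + b + 2 + 1 = a + b + 3 from rfl]
  simp only [lie_sub, sub_lie, lie_smul, smul_lie, e1, e2, e3, e4]
  push_cast
  module

end G

/-- Let `k` be a field of characteristic zero, `W` the Witt algebra (basis `L n`, `n : ℤ`,
`⁅L n, L m⁆ = (n-m) • L (n+m)`), and `lam ∈ k`, `lam ≠ 0`.
`O(lam)` is the Lie subalgebra of `W` spanned by `{O_n^{(lam)} := L n - lamⁿ • L (-n) : n ≥ 1}`.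
For `n ≥ 1`, the element `u_n^{(lam)} := −(t + lam·t⁻¹)^{n−1}(t² − lam) d/dt` expands in the
basis `L` as `u n = Σ_{j<n} C(n−1,j)·lam^j • (L (n−2j) − lam • L (n−2j−2))` (hypothesis `hu`).
`W1` is the one-sided Witt algebra `Der(k[t])`, with (shifted) basis `ℓ i` (`i : ℕ`)
corresponding to `L_{i−1}`, so `⁅ℓ i, ℓ j⁆ = (i−j) • ℓ (i+j−1)`; for `n ≥ 1`,
`g n := ℓ (n+1) − 4·lam • ℓ (n−1)` corresponds to `−t^{n−1}(t² − 4·lam) d/dt`, and the span of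
`{g n : n ≥ 1}` is the subalgebra `(t² − 4·lam)·k[t]·d/dt`.
Then `{u n : n ≥ 1}` is a basis of `O(lam)`, the bracket satisfies
`⁅u n, u m⁆ = (n−m) • (u (n+m) − 4·lam • u (n+m−2))` for `n, m ≥ 1`, and `O(lam)` is isomorphic
as a Lie algebra to `(t² − 4·lam)·k[t]·d/dt` via the change of variables sending `u n ↦ g n`. -/
theorem O_lam_new_basis_and_iso_to_submodule_subalgebra
    {k : Type*} [Field k] [CharZero k]
    {W : Type*} [LieRing W] [LieAlgebra k W]
    (L : ℤ → W)
    (hLindep : LinearIndependent k L)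
    (hLspan : Submodule.span k (Set.range L) = ⊤)
    (hLbracket : ∀ n m : ℤ, ⁅L n, L m⁆ = ((n - m : ℤ) : k) • L (n + m))
    (lam : k) (hlam : lam ≠ 0)
    (u : ℕ → W)
    (hu : ∀ n : ℕ, u n = ∑ j ∈ Finset.range n,
      ((((n - 1).choose j : ℕ) : k) * lam ^ j) •
        (L ((n : ℤ) - 2 * j) - lam • L ((n : ℤ) - 2 * j - 2)))
    {W1 : Type*} [LieRing W1] [LieAlgebra k W1]
    (ℓ : ℕ → W1)
    (hℓindep : LinearIndependent k ℓ)
    (hℓspan : Submodule.span k (Set.range ℓ) = ⊤)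
    (hℓbracket : ∀ i j : ℕ, ⁅ℓ i, ℓ j⁆ = (((i : ℤ) - (j : ℤ)) : k) • ℓ (i + j - 1))
    (g : ℕ → W1)
    (hg : ∀ n : ℕ, g n = ℓ (n + 1) - (4 * lam) • ℓ (n - 1)) :
    -- `{u n : n ≥ 1}` is a basis of `O(lam)`
    LinearIndependent k (fun n : ℕ => u (n + 1)) ∧
    Submodule.span k (Set.range fun n : ℕ => u (n + 1)) =
      Submodule.span k {x : W | ∃ n : ℤ, 1 ≤ n ∧ x = L n - lam ^ n • L (-n)} ∧
    -- the bracket in the new basis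
    (∀ n m : ℕ, 1 ≤ n → 1 ≤ m →
      ⁅u n, u m⁆ = (((n : ℤ) - (m : ℤ)) : k) • (u (n + m) - (4 * lam) • u (n + m - 2))) ∧
    -- `O(lam) ≅ (t² − 4·lam)·k[t]·d/dt` via `u n ↦ g n`
    (∃ (H : LieSubalgebra k W) (T : LieSubalgebra k W1),
      (H : Submodule k W) =
        Submodule.span k {x : W | ∃ n : ℤ, 1 ≤ n ∧ x = L n - lam ^ n • L (-n)} ∧
      (T : Submodule k W1) = Submodule.span k (Set.range fun n : ℕ => g (n + 1)) ∧
      ∃ e : (↥H) ≃ₗ⁅k⁆ (↥T),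
        ∀ n : ℕ, 1 ≤ n → ∀ (x : ↥H) (y : ↥T),
          (x : W) = u n → (y : W1) = g n → e x = y) := by
  classical
  let b : Module.Basis ℤ k W := Module.Basis.mk hLindep hLspan.ge
  have hb : ∀ a : ℤ, b a = L a := fun a => Module.Basis.mk_apply _ _ a
  have hbr : ∀ n m : ℕ, ⁅u (n + 1), u (m + 1)⁆
      = (((n : ℤ) - (m : ℤ)) : k) • (u (n + m + 2) - (4 * lam) • u (n + m)) :=
    bracket_u L lam hLbracket u hu
  have hu0 : u 0 = 0 := by rw [hu 0]; simp
  -- Part 1 : linear independence of the u-family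
  have hindep : LinearIndependent k (fun n : ℕ => u (n + 1)) := by
    apply linearIndependent_of_leading (fun n => u (n + 1)) (fun i => b.coord ((i : ℤ) + 1))
    · intro i j hij
      rw [coord_u L lam u b hb hu i ((j : ℤ) + 1) (by omega), if_neg (by omega)]
    · intro i
      rw [coord_u L lam u b hb hu i ((i : ℤ) + 1) le_rfl, if_pos rfl]
  -- membership of all the `vt` generators in the span of S
  have hvt_mem : ∀ a : ℤ, L a - lam ^ a • L (-a) ∈
      Submodule.span k {x : W | ∃ n : ℤ, 1 ≤ n ∧ x = L n - lam ^ n • L (-n)} := by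
    intro a
    rcases lt_trichotomy a 0 with h | rfl | h
    · rw [vt_neg L lam hlam a]
      exact Submodule.smul_mem _ _ (Submodule.subset_span ⟨-a, by omega, rfl⟩)
    · simp
    · exact Submodule.subset_span ⟨a, by omega, rfl⟩
  -- the span of S is closed under the bracket
  have hspanS_lie : ∀ x ∈ Submodule.span k {x : W | ∃ n : ℤ, 1 ≤ n ∧ x = L n - lam ^ n • L (-n)},
      ∀ y ∈ Submodule.span k {x : W | ∃ n : ℤ, 1 ≤ n ∧ x = L n - lam ^ n • L (-n)},
      ⁅x, y⁆ ∈ Submodule.span k {x : W | ∃ n : ℤ, 1 ≤ n ∧ x = L n - lam ^ n • L (-n)} := by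
    intro x hx y hy
    induction hy using Submodule.span_induction with
    | mem z hz =>
      induction hx using Submodule.span_induction with
      | mem w hw =>
          obtain ⟨nw, hnw1, rfl⟩ := hw
          obtain ⟨nz, hnz1, rfl⟩ := hz
          rw [vt_bracket L lam hlam hLbracket nw nz]
          exact add_mem (Submodule.smul_mem _ _ (hvt_mem _))
            (Submodule.smul_mem _ _ (Submodule.smul_mem _ _ (hvt_mem _)))
      | zero => rw [zero_lie]; exact zero_mem _
      | add w₁ w₂ hw1 hw2 ih1 ih2 => rw [add_lie]; exact add_mem ih1 ih2
      | smul c w hw ih => rw [smul_lie]; exact Submodule.smul_mem _ _ ih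
    | zero => rw [lie_zero]; exact zero_mem _
    | add z₁ z₂ hz1 hz2 ih1 ih2 => rw [lie_add]; exact add_mem ih1 ih2
    | smul c z hz ih => rw [lie_smul]; exact Submodule.smul_mem _ _ ih
  -- small values of u
  have hu1 : u 1 = L 1 - lam ^ (1 : ℤ) • L (-1) := by
    rw [hu 1, Finset.sum_range_one]
    norm_num
  have hu2 : u 2 = L 2 - lam ^ (2 : ℤ) • L (-2) := by
    rw [hu 2, Finset.sum_range_succ, Finset.sum_range_one,
      show ((2 : ℤ)) = ((2 : ℕ) : ℤ) from by norm_num, zpow_natCast, pow_two]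
    norm_num
    module
  -- the span of the u-family is closed under the bracket
  have hspanU_lie : ∀ x ∈ Submodule.span k (Set.range fun n : ℕ => u (n + 1)),
      ∀ y ∈ Submodule.span k (Set.range fun n : ℕ => u (n + 1)),
      ⁅x, y⁆ ∈ Submodule.span k (Set.range fun n : ℕ => u (n + 1)) := by
    intro x hx y hy
    induction hy using Submodule.span_induction with
    | mem z hz =>
      induction hx using Submodule.span_induction with
      | mem w hw =>
          obtain ⟨a, rfl⟩ := hw
          obtain ⟨c, rfl⟩ := hz
          rw [hbr a c]
          have h2 : u (a + c) ∈ Submodule.span k (Set.range fun n : ℕ => u (n + 1)) := by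
            rcases Nat.eq_zero_or_pos (a + c) with h | h
            · rw [h, hu0]; exact zero_mem _
            · obtain ⟨d, hd⟩ : ∃ d, a + c = d + 1 := ⟨a + c - 1, by omega⟩
              rw [hd]; exact Submodule.subset_span ⟨d, rfl⟩
          exact Submodule.smul_mem _ _ (sub_mem (Submodule.subset_span ⟨a + c + 1, rfl⟩)
            (Submodule.smul_mem _ _ h2))
      | zero => rw [zero_lie]; exact zero_mem _
      | add w₁ w₂ hw1 hw2 ih1 ih2 => rw [add_lie]; exact add_mem ih1 ih2
      | smul c w hw ih => rw [smul_lie]; exact Submodule.smul_mem _ _ ih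
    | zero => rw [lie_zero]; exact zero_mem _
    | add z₁ z₂ hz1 hz2 ih1 ih2 => rw [lie_add]; exact add_mem ih1 ih2
    | smul c z hz ih => rw [lie_smul]; exact Submodule.smul_mem _ _ ih
  -- every u (c+1) lies in the span of S
  have hmemU : ∀ c : ℕ, u (c + 1) ∈
      Submodule.span k {x : W | ∃ n : ℤ, 1 ≤ n ∧ x = L n - lam ^ n • L (-n)} := by
    intro c
    induction c using Nat.strong_induction_on with
    | _ c ih =>
      rcases c with _ | c
      · rw [hu1]; exact hvt_mem 1
      rcases c with _ | c
      · rw [hu2]; exact hvt_mem 2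
      have hb0 := hbr 0 (c + 1)
      simp only [Nat.zero_add, show c + 1 + 1 = c + 2 from rfl,
        show c + 1 + 2 = c + 3 from rfl] at hb0
      have hcoef : ((((0 : ℕ) : ℤ)) : k) - ((((c + 1 : ℕ)) : ℤ) : k) ≠ 0 := by
        have hcv : ((((0 : ℕ) : ℤ)) : k) - ((((c + 1 : ℕ)) : ℤ) : k) = -(((c + 1 : ℕ)) : k) := by
          push_cast; ring
        rw [hcv, neg_ne_zero]
        exact Nat.cast_ne_zero.mpr (Nat.succ_ne_zero c)
      have key : u (c + 3) = (4 * lam) • u (c + 1)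
          + (((((0 : ℕ) : ℤ)) : k) - ((((c + 1 : ℕ)) : ℤ) : k))⁻¹ • ⁅u 1, u (c + 2)⁆ := by
        rw [hb0, inv_smul_smul₀ hcoef]
        abel
      show u (c + 3) ∈ _
      rw [key]
      exact add_mem (Submodule.smul_mem _ _ (ih c (by omega)))
        (Submodule.smul_mem _ _ (hspanS_lie _ (ih 0 (by omega)) _ (ih (c + 1) (by omega))))
  -- every vt (c+1) lies in the span of the u-family
  have hmemV : ∀ c : ℕ, ∀ a : ℤ, a = (c : ℤ) + 1 →
      (L a - lam ^ a • L (-a)) ∈ Submodule.span k (Set.range fun n : ℕ => u (n + 1)) := by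
    intro c
    induction c using Nat.strong_induction_on with
    | _ c ih =>
      intro a ha
      subst ha
      rcases c with _ | c
      · rw [show ((0 : ℕ) : ℤ) + 1 = 1 from by norm_num, ← hu1]
        exact Submodule.subset_span ⟨0, rfl⟩
      rcases c with _ | c
      · rw [show ((1 : ℕ) : ℤ) + 1 = 2 from by norm_num, ← hu2]
        exact Submodule.subset_span ⟨1, rfl⟩
      rw [show ((c + 2 : ℕ) : ℤ) + 1 = (c : ℤ) + 3 from by push_cast; ring]
      have hvb := vt_bracket L lam hlam hLbracket 1 ((c : ℤ) + 2)
      rw [show (1 : ℤ) + ((c : ℤ) + 2) = (c : ℤ) + 3 from by ring,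
        show (c : ℤ) + 2 - 1 = (c : ℤ) + 1 from by ring] at hvb
      have hcoef : ((1 - ((c : ℤ) + 2) : ℤ) : k) ≠ 0 := by
        have hcv : ((1 - ((c : ℤ) + 2) : ℤ) : k) = -(((c + 1 : ℕ)) : k) := by
          push_cast; ring
        rw [hcv, neg_ne_zero]
        exact Nat.cast_ne_zero.mpr (Nat.succ_ne_zero c)
      have key : L ((c : ℤ) + 3) - lam ^ ((c : ℤ) + 3) • L (-((c : ℤ) + 3))
          = ((1 - ((c : ℤ) + 2) : ℤ) : k)⁻¹ •
            (⁅L 1 - lam ^ (1 : ℤ) • L (-1),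
              L ((c : ℤ) + 2) - lam ^ ((c : ℤ) + 2) • L (-((c : ℤ) + 2))⁆
             - ((((c : ℤ) + 3 : ℤ)) : k) • lam ^ (1 : ℤ) •
               (L ((c : ℤ) + 1) - lam ^ ((c : ℤ) + 1) • L (-((c : ℤ) + 1)))) := by
        rw [eq_comm, inv_smul_eq_iff₀ hcoef, hvb]
        abel
      rw [key]
      refine Submodule.smul_mem _ _ (sub_mem ?_ (Submodule.smul_mem _ _
        (Submodule.smul_mem _ _ (ih c (by omega) _ rfl))))
      refine hspanU_lie _ ?_ _ (ih (c + 1) (by omega) ((c : ℤ) + 2) (by push_cast; ring))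
      rw [← hu1]
      exact Submodule.subset_span ⟨0, rfl⟩
  -- Part 2 : equality of the two spans
  have hspanEq : Submodule.span k (Set.range fun n : ℕ => u (n + 1))
      = Submodule.span k {x : W | ∃ n : ℤ, 1 ≤ n ∧ x = L n - lam ^ n • L (-n)} := by
    apply le_antisymm
    · rw [Submodule.span_le]
      rintro x ⟨i, rfl⟩
      exact hmemU i
    · rw [Submodule.span_le]
      rintro x ⟨n, hn1, rfl⟩
      obtain ⟨c, rfl⟩ : ∃ c : ℕ, n = (c : ℤ) + 1 := ⟨(n - 1).toNat, by omega⟩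
      exact hmemV c _ rfl
  -- Part 3
  have part3 : ∀ n m : ℕ, 1 ≤ n → 1 ≤ m →
      ⁅u n, u m⁆ = (((n : ℤ) - (m : ℤ)) : k) • (u (n + m) - (4 * lam) • u (n + m - 2)) := by
    intro n m hn hm
    obtain ⟨a, rfl⟩ : ∃ a, n = a + 1 := ⟨n - 1, by omega⟩
    obtain ⟨bq, rfl⟩ : ∃ bq, m = bq + 1 := ⟨m - 1, by omega⟩
    rw [show a + 1 + (bq + 1) = a + bq + 2 from by omega,
      show a + bq + 2 - 2 = a + bq from by omega, hbr a bq,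
      show ((((a + 1 : ℕ)) : ℤ) - (((bq + 1 : ℕ)) : ℤ) : k) = (((a : ℤ) - (bq : ℤ)) : k)
        from by push_cast; ring]
  -- the span of the g-family is closed under the bracket
  have hbrg : ∀ a c : ℕ, ⁅g (a + 1), g (c + 1)⁆
      = (((a : ℤ) - (c : ℤ)) : k) • (g (a + c + 2) - (4 * lam) • g (a + c)) :=
    bracket_g lam ℓ hℓbracket g hg
  have hspanT_lie : ∀ x ∈ Submodule.span k (Set.range fun n : ℕ => g (n + 1)),
      ∀ y ∈ Submodule.span k (Set.range fun n : ℕ => g (n + 1)),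
      ⁅x, y⁆ ∈ Submodule.span k (Set.range fun n : ℕ => g (n + 1)) := by
    intro x hx y hy
    induction hy using Submodule.span_induction with
    | mem z hz =>
      induction hx using Submodule.span_induction with
      | mem w hw =>
          obtain ⟨a, rfl⟩ := hw
          obtain ⟨c, rfl⟩ := hz
          rcases Nat.eq_zero_or_pos (a + c) with h | h
          · obtain ⟨rfl, rfl⟩ : a = 0 ∧ c = 0 := by omega
            rw [lie_self]; exact zero_mem _
          obtain ⟨d, hd⟩ : ∃ d, a + c = d + 1 := ⟨a + c - 1, by omega⟩
          rw [hbrg a c, hd]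
          exact Submodule.smul_mem _ _ (sub_mem (Submodule.subset_span ⟨d + 2, rfl⟩)
            (Submodule.smul_mem _ _ (Submodule.subset_span ⟨d, rfl⟩)))
      | zero => rw [zero_lie]; exact zero_mem _
      | add w₁ w₂ hw1 hw2 ih1 ih2 => rw [add_lie]; exact add_mem ih1 ih2
      | smul c w hw ih => rw [smul_lie]; exact Submodule.smul_mem _ _ ih
    | zero => rw [lie_zero]; exact zero_mem _
    | add z₁ z₂ hz1 hz2 ih1 ih2 => rw [lie_add]; exact add_mem ih1 ih2
    | smul c z hz ih => rw [lie_smul]; exact Submodule.smul_mem _ _ ih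
  -- independence of the g-family
  have hindepg : LinearIndependent k (fun n : ℕ => g (n + 1)) := by
    let bl : Module.Basis ℕ k W1 := Module.Basis.mk hℓindep hℓspan.ge
    have hbl : ∀ N a : ℕ, bl.coord N (ℓ a) = if a = N then 1 else 0 := by
      intro N a
      rw [show ℓ a = bl a from (Module.Basis.mk_apply _ _ a).symm, Module.Basis.coord_apply,
        Module.Basis.repr_self, Finsupp.single_apply]
    apply linearIndependent_of_leading (fun n => g (n + 1)) (fun i => bl.coord (i + 2))
    · intro i j hij
      have e1 := hbl (j + 2) (i + 1 + 1)
      have e2 := hbl (j + 2) (i + 1 - 1)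
      rw [hg (i + 1), map_sub, map_smul, e1, e2, if_neg (by omega), if_neg (by omega)]
      simp
    · intro i
      have e1 := hbl (i + 2) (i + 1 + 1)
      have e2 := hbl (i + 2) (i + 1 - 1)
      rw [hg (i + 1), map_sub, map_smul, e1, e2, if_pos (by omega), if_neg (by omega)]
      simp
  -- the two Lie subalgebras
  refine ⟨hindep, hspanEq, part3, ?_⟩
  refine ⟨⟨Submodule.span k {x : W | ∃ n : ℤ, 1 ≤ n ∧ x = L n - lam ^ n • L (-n)},
      fun hx hy => hspanS_lie _ hx _ hy⟩,
    ⟨Submodule.span k (Set.range fun n : ℕ => g (n + 1)),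
      fun hx hy => hspanT_lie _ hx _ hy⟩, rfl, rfl, ?_⟩
  set H : LieSubalgebra k W := ⟨Submodule.span k
    {x : W | ∃ n : ℤ, 1 ≤ n ∧ x = L n - lam ^ n • L (-n)}, fun hx hy => hspanS_lie _ hx _ hy⟩
    with hHdef
  set T : LieSubalgebra k W1 := ⟨Submodule.span k (Set.range fun n : ℕ => g (n + 1)),
    fun hx hy => hspanT_lie _ hx _ hy⟩ with hTdef
  -- bases of H and T
  let famH : ℕ → ↥H := fun i => ⟨u (i + 1), hmemU i⟩
  let famT : ℕ → ↥T := fun i => ⟨g (i + 1), Submodule.subset_span ⟨i, rfl⟩⟩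
  have hindepH : LinearIndependent k famH :=
    LinearIndependent.of_comp (H : Submodule k W).subtype hindep
  have hindepT : LinearIndependent k famT :=
    LinearIndependent.of_comp (T : Submodule k W1).subtype hindepg
  have hspanH : ⊤ ≤ Submodule.span k (Set.range famH) := by
    have hmap : Submodule.map (H : Submodule k W).subtype (Submodule.span k (Set.range famH))
        = Submodule.map (H : Submodule k W).subtype ⊤ := by
      rw [Submodule.map_span, Submodule.map_top, Submodule.range_subtype, ← Set.range_comp]
      show Submodule.span k (Set.range fun i : ℕ => u (i + 1)) = _
      rw [hspanEq]
    exact le_of_eq (Submodule.map_injective_of_injective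
      (Submodule.injective_subtype _) hmap).symm
  have hspanT : ⊤ ≤ Submodule.span k (Set.range famT) := by
    have hmap : Submodule.map (T : Submodule k W1).subtype (Submodule.span k (Set.range famT))
        = Submodule.map (T : Submodule k W1).subtype ⊤ := by
      rw [Submodule.map_span, Submodule.map_top, Submodule.range_subtype, ← Set.range_comp]
      show Submodule.span k (Set.range fun i : ℕ => g (i + 1)) = _
      rfl
    exact le_of_eq (Submodule.map_injective_of_injective
      (Submodule.injective_subtype _) hmap).symm
  let basisH : Module.Basis ℕ k ↥H := Module.Basis.mk hindepH hspanH
  let basisT : Module.Basis ℕ k ↥T := Module.Basis.mk hindepT hspanT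
  have hcoeH : ∀ i : ℕ, ((basisH i : W)) = u (i + 1) := by
    intro i; rw [show basisH i = famH i from Module.Basis.mk_apply _ _ i]
  have hcoeT : ∀ i : ℕ, ((basisT i : W1)) = g (i + 1) := by
    intro i; rw [show basisT i = famT i from Module.Basis.mk_apply _ _ i]
  let e : ↥H ≃ₗ[k] ↥T := basisH.equiv basisT (Equiv.refl ℕ)
  have heb : ∀ i : ℕ, e (basisH i) = basisT i := by
    intro i
    rw [show e (basisH i) = basisT ((Equiv.refl ℕ) i) from basisH.equiv_apply i basisT _]
    rfl
  have hsmulH : ∀ (t : k) (x : ↥H), ((t • x : ↥H) : W) = t • (x : W) := fun t x => rfl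
  have hsubH : ∀ (x y : ↥H), ((x - y : ↥H) : W) = (x : W) - (y : W) := fun x y => rfl
  have hsmulT : ∀ (t : k) (x : ↥T), ((t • x : ↥T) : W1) = t • (x : W1) := fun t x => rfl
  have hsubT : ∀ (x y : ↥T), ((x - y : ↥T) : W1) = (x : W1) - (y : W1) := fun x y => rfl
  -- the bracket relations inside H and T
  have core : ∀ a c : ℕ, e ⁅basisH a, basisH c⁆ = ⁅basisT a, basisT c⁆ := by
    intro a c
    rcases Nat.eq_zero_or_pos (a + c) with h | h
    · obtain ⟨rfl, rfl⟩ : a = 0 ∧ c = 0 := by omega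
      rw [lie_self, lie_self, map_zero]
    obtain ⟨d, hd⟩ : ∃ d, a + c = d + 1 := ⟨a + c - 1, by omega⟩
    have hH : ⁅basisH a, basisH c⁆
        = (((a : ℤ) - (c : ℤ)) : k) • (basisH (a + c + 1) - (4 * lam) • basisH d) := by
      apply Subtype.ext
      simp only [LieSubalgebra.coe_bracket, hsmulH, hsubH, hcoeH]
      rw [hbr a c, hd]
    have hT : ⁅basisT a, basisT c⁆
        = (((a : ℤ) - (c : ℤ)) : k) • (basisT (a + c + 1) - (4 * lam) • basisT d) := by
      apply Subtype.ext
      simp only [LieSubalgebra.coe_bracket, hsmulT, hsubT, hcoeT]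
      rw [hbrg a c, hd]
    rw [hH, hT, map_smul, map_sub, map_smul, heb, heb]
  have hmaplie : ∀ x y : ↥H, e ⁅x, y⁆ = ⁅e x, e y⁆ := by
    let B1 : ↥H →ₗ[k] ↥H →ₗ[k] ↥T := LinearMap.mk₂ k (fun x y => e ⁅x, y⁆)
      (fun x x' y => by simp only [add_lie, map_add]) (fun c x y => by simp only [smul_lie, map_smul])
      (fun x y y' => by simp only [lie_add, map_add]) (fun c x y => by simp only [lie_smul, map_smul])
    let B2 : ↥H →ₗ[k] ↥H →ₗ[k] ↥T := LinearMap.mk₂ k (fun x y => ⁅e x, e y⁆)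
      (fun x x' y => by simp only [map_add, add_lie]) (fun c x y => by simp only [map_smul, smul_lie])
      (fun x y y' => by simp only [map_add, lie_add]) (fun c x y => by simp only [map_smul, lie_smul])
    have hB : B1 = B2 := by
      apply basisH.ext
      intro i
      apply basisH.ext
      intro j
      show e ⁅basisH i, basisH j⁆ = ⁅e (basisH i), e (basisH j)⁆
      rw [core i j, heb, heb]
    intro x y
    exact DFunLike.congr_fun (DFunLike.congr_fun hB x) y
  refine ⟨⟨⟨e.toLinearMap, fun {x y} => hmaplie x y⟩, e.symm, e.left_inv, e.right_inv⟩, ?_⟩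
  intro n hn x y hx hy
  obtain ⟨c, rfl⟩ : ∃ c, n = c + 1 := ⟨n - 1, by omega⟩
  have hxb : x = basisH c := Subtype.ext (hx.trans (hcoeH c).symm)
  have hyb : y = basisT c := Subtype.ext (hy.trans (hcoeT c).symm)
  rw [hxb, hyb]
  exact heb c
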